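/- Let A be a unital alternative *-algebra over ℂ containing a nontrivial symmetric idempotent e satisfying conditions (♠) and (♣), and let Φ : A → A be a map satisfying the *-Jordan n-derivation identity in the last two slots. Then Φ is additive: Φ(a + b) = Φ(a) + Φ(b) for all a, b ∈ A. -/

import Mathlib

/-- The Jordan `•`-product `a • b = ab + b a*`. -/
def starJordan {A : Type*} [NonAssocRing A] [StarRing A] (a b : A) : A :=
  a * b + b * star a

/-- Left-normed iterated Jordan `•`-product of a list (empty list ↦ 0, junk value). -/
def leftStarJordan {A : Type*} [NonAssocRing A] [StarRing A] : List A → A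
  | [] => 0
  | x :: xs => xs.foldl starJordan x

/-- The family `a₁ = ⋯ = a_{n-2} = 1`, `a_{n-1} = x`, `a_n = y`. -/
def lastTwoFamily {A : Type*} [One A] (n : ℕ) (x y : A) : Fin n → A :=
  fun i => if (i : ℕ) = n - 2 then x else if (i : ℕ) = n - 1 then y else 1

/-- `e₁ = e`, `e₂ = 1 - e`. -/
def peirceIdem {A : Type*} [NonAssocRing A] (e : A) : Fin 2 → A :=
  fun i => if i = 0 then e else 1 - e

/-- Membership in the Peirce component `A_{ij}`: `eᵢ x = x` and `x eⱼ = x`. -/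
def inPeirce {A : Type*} [NonAssocRing A] (e : A) (i j : Fin 2) (x : A) : Prop :=
  peirceIdem e i * x = x ∧ x * peirceIdem e j = x

/-- The inner derivation `Ξ_{y,z}(a) = y(za) − z(ya) + y(az) − (ya)z + (az)y − (ay)z`. -/
def innerDer {A : Type*} [NonAssocRing A] (y z a : A) : A :=
  y * (z * a) - z * (y * a) + y * (a * z) - (y * a) * z + (a * z) * y - (a * y) * z

set_option linter.unusedSectionVars false
set_option linter.unreachableTactic false
set_option linter.unusedTactic false
set_option linter.unusedVariables false

namespace S9

variable {A : Type*} [NonAssocRing A] [Module ℂ A] [SMulCommClass ℂ A A]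
    [IsScalarTower ℂ A A] [StarRing A]

/-! ### Basic lemmas on the star-Jordan product -/

lemma sj_add_right (x a b : A) : starJordan x (a + b) = starJordan x a + starJordan x b := by
  simp only [starJordan, mul_add, add_mul]; abel

lemma sj_add_left (a b y : A) : starJordan (a + b) y = starJordan a y + starJordan b y := by
  simp only [starJordan, add_mul, mul_add, star_add]; abel

lemma sj_sub_right (x a b : A) : starJordan x (a - b) = starJordan x a - starJordan x b := by
  simp only [starJordan, mul_sub, sub_mul]; abel

lemma sj_zero_right (x : A) : starJordan x 0 = 0 := by simp [starJordan]

lemma sj_zero_left (y : A) : starJordan 0 y = 0 := by simp [starJordan]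

lemma half_zero (z : A) (h : z + z = 0) : z = 0 := by
  have h2 : (2 : ℂ) • z = 0 := by rw [two_smul]; exact h
  calc z = ((2:ℂ)⁻¹ * 2) • z := by norm_num
    _ = (2:ℂ)⁻¹ • ((2:ℂ) • z) := by rw [mul_smul]
    _ = 0 := by rw [h2, smul_zero]

lemma smul_cancel {c : ℂ} (hc : c ≠ 0) {z : A} (h : c • z = 0) : z = 0 := by
  calc z = (c⁻¹ * c) • z := by rw [inv_mul_cancel₀ hc, one_smul]
    _ = c⁻¹ • (c • z) := by rw [mul_smul]
    _ = 0 := by rw [h, smul_zero]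

/-! ### Linearized alternative laws -/

lemma lin1 (h1 : ∀ a b : A, a * a * b = a * (a * b)) (a b c : A) :
    a*b*c + b*a*c = a*(b*c) + b*(a*c) := by
  have h := h1 (a + b) c
  simp only [add_mul, mul_add] at h
  rw [h1 a c, h1 b c] at h
  rw [← sub_eq_zero] at h ⊢
  rw [← h]; abel

lemma lin2 (h2 : ∀ a b : A, b * a * a = b * (a * a)) (x y f : A) :
    x*y*f + x*f*y = x*(y*f) + x*(f*y) := by
  have h := h2 (y + f) x
  simp only [add_mul, mul_add] at h
  rw [h2 y x, h2 f x] at h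
  rw [← sub_eq_zero] at h ⊢
  rw [← h]; abel

lemma G1 (h1 : ∀ a b : A, a * a * b = a * (a * b)) (f x y : A) :
    f*(x*y) = (x*f)*y + (f*x)*y - x*(f*y) := by
  have h := lin1 h1 x f y
  rw [eq_sub_iff_add_eq, add_comm]
  exact h.symm

lemma G2 (h2 : ∀ a b : A, b * a * a = b * (a * a)) (f x y : A) :
    (x*y)*f = x*(y*f) + x*(f*y) - (x*f)*y := by
  have h := lin2 h2 x y f
  rw [eq_sub_iff_add_eq]
  exact h

lemma flexi (h1 : ∀ a b : A, a * a * b = a * (a * b))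
    (h2 : ∀ a b : A, b * a * a = b * (a * a)) (f x : A) :
    (f*x)*f = f*(x*f) := by
  have l := lin1 h1 f x f
  have r := h2 f x
  rw [r] at l
  exact add_right_cancel l

lemma eabs (h1 : ∀ a b : A, a * a * b = a * (a * b)) {f : A} (hff : f*f = f) (z : A) :
    f*(f*z) = f*z := by
  have := h1 f z; rw [hff] at this; exact this.symm

lemma rabs (h2 : ∀ a b : A, b * a * a = b * (a * a)) {f : A} (hff : f*f = f) (z : A) :
    (z*f)*f = z*f := by
  have := h2 f z; rw [hff] at this; exact this

/-! ### Peirce components -/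

def P11 (f x : A) : Prop := f*x = x ∧ x*f = x
def P12 (f x : A) : Prop := f*x = x ∧ x*f = 0
def P21 (f x : A) : Prop := f*x = 0 ∧ x*f = x
def P22 (f x : A) : Prop := f*x = 0 ∧ x*f = 0

section Peirce

variable (h1 : ∀ a b : A, a * a * b = a * (a * b))
variable (h2 : ∀ a b : A, b * a * a = b * (a * a))
variable {f : A} (hff : f * f = f)

include h1 hff in
lemma r11_21 {x y : A} (hx : P11 f x) (hy : P21 f y) : x * y = 0 := by
  have hG : f*(x*y) = x*y + x*y := by
    rw [G1 h1, hx.2, hx.1, hy.1]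
    first
    | (simp only [zero_mul, mul_zero]; abel)
    | abel
  have he := eabs h1 hff (x*y)
  rw [hG, mul_add, hG] at he
  have h' : (x*y + x*y) + (x*y + x*y) = (x*y + x*y) + 0 := by rw [add_zero]; exact he
  exact half_zero _ (add_left_cancel h')

include h1 hff in
lemma r11_22 {x y : A} (hx : P11 f x) (hy : P22 f y) : x * y = 0 := by
  have hG : f*(x*y) = x*y + x*y := by
    rw [G1 h1, hx.2, hx.1, hy.1]
    first
    | (simp only [zero_mul, mul_zero]; abel)
    | abel
  have he := eabs h1 hff (x*y)
  rw [hG, mul_add, hG] at he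
  have h' : (x*y + x*y) + (x*y + x*y) = (x*y + x*y) + 0 := by rw [add_zero]; exact he
  exact half_zero _ (add_left_cancel h')

include h1 hff in
lemma r22_11 {x y : A} (hx : P22 f x) (hy : P11 f y) : x * y = 0 := by
  have hG : f*(x*y) = -(x*y) := by
    rw [G1 h1, hx.2, hx.1, hy.1]
    first
    | (simp only [zero_mul, mul_zero]; abel)
    | abel
  have he := eabs h1 hff (x*y)
  rw [hG, mul_neg, hG, neg_neg] at he
  exact half_zero _ (eq_neg_iff_add_eq_zero.mp he)

include h1 hff in
lemma r22_12 {x y : A} (hx : P22 f x) (hy : P12 f y) : x * y = 0 := by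
  have hG : f*(x*y) = -(x*y) := by
    rw [G1 h1, hx.2, hx.1, hy.1]
    first
    | (simp only [zero_mul, mul_zero]; abel)
    | abel
  have he := eabs h1 hff (x*y)
  rw [hG, mul_neg, hG, neg_neg] at he
  exact half_zero _ (eq_neg_iff_add_eq_zero.mp he)

include h2 hff in
lemma r12_11 {x y : A} (hx : P12 f x) (hy : P11 f y) : x * y = 0 := by
  have hG : (x*y)*f = x*y + x*y := by
    rw [G2 h2, hx.2, hy.2, hy.1]
    first
    | (simp only [zero_mul, mul_zero]; abel)
    | abel
  have he := rabs h2 hff (x*y)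
  rw [hG, add_mul, hG] at he
  have h' : (x*y + x*y) + (x*y + x*y) = (x*y + x*y) + 0 := by rw [add_zero]; exact he
  exact half_zero _ (add_left_cancel h')

include h2 hff in
lemma r21_22 {x y : A} (hx : P21 f x) (hy : P22 f y) : x * y = 0 := by
  have hG : (x*y)*f = -(x*y) := by
    rw [G2 h2, hx.2, hy.2, hy.1]
    first
    | (simp only [zero_mul, mul_zero]; abel)
    | abel
  have he := rabs h2 hff (x*y)
  rw [hG, neg_mul, hG, neg_neg] at he
  exact half_zero _ (eq_neg_iff_add_eq_zero.mp he)

include h1 h2 in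
lemma r11_11 {x y : A} (hx : P11 f x) (hy : P11 f y) : P11 f (x*y) := by
  constructor
  · rw [G1 h1, hx.2, hx.1, hy.1]
    first
    | (simp only [zero_mul, mul_zero]; abel)
    | abel
  · rw [G2 h2, hx.2, hy.2, hy.1]
    first
    | (simp only [zero_mul, mul_zero]; abel)
    | abel

include h1 h2 in
lemma r11_12 {x y : A} (hx : P11 f x) (hy : P12 f y) : P12 f (x*y) := by
  constructor
  · rw [G1 h1, hx.2, hx.1, hy.1]
    first
    | (simp only [zero_mul, mul_zero]; abel)
    | abel
  · rw [G2 h2, hx.2, hy.2, hy.1]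
    first
    | (simp only [zero_mul, mul_zero]; abel)
    | abel

include h1 h2 in
lemma r12_21 {x y : A} (hx : P12 f x) (hy : P21 f y) : P11 f (x*y) := by
  constructor
  · rw [G1 h1, hx.2, hx.1, hy.1]
    first
    | (simp only [zero_mul, mul_zero]; abel)
    | abel
  · rw [G2 h2, hx.2, hy.2, hy.1]
    first
    | (simp only [zero_mul, mul_zero]; abel)
    | abel

include h1 h2 in
lemma r12_12 {x y : A} (hx : P12 f x) (hy : P12 f y) : P21 f (x*y) := by
  constructor
  · rw [G1 h1, hx.2, hx.1, hy.1]
    first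
    | (simp only [zero_mul, mul_zero]; abel)
    | abel
  · rw [G2 h2, hx.2, hy.2, hy.1]
    first
    | (simp only [zero_mul, mul_zero]; abel)
    | abel

include h1 h2 in
lemma r21_11 {x y : A} (hx : P21 f x) (hy : P11 f y) : P21 f (x*y) := by
  constructor
  · rw [G1 h1, hx.2, hx.1, hy.1]
    first
    | (simp only [zero_mul, mul_zero]; abel)
    | abel
  · rw [G2 h2, hx.2, hy.2, hy.1]
    first
    | (simp only [zero_mul, mul_zero]; abel)
    | abel

include h1 h2 in
lemma r21_21 {x y : A} (hx : P21 f x) (hy : P21 f y) : P12 f (x*y) := by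
  constructor
  · rw [G1 h1, hx.2, hx.1, hy.1]
    first
    | (simp only [zero_mul, mul_zero]; abel)
    | abel
  · rw [G2 h2, hx.2, hy.2, hy.1]
    first
    | (simp only [zero_mul, mul_zero]; abel)
    | abel

include h1 h2 in
lemma r21_12 {x y : A} (hx : P21 f x) (hy : P12 f y) : P22 f (x*y) := by
  constructor
  · rw [G1 h1, hx.2, hx.1, hy.1]
    first
    | (simp only [zero_mul, mul_zero]; abel)
    | abel
  · rw [G2 h2, hx.2, hy.2, hy.1]
    first
    | (simp only [zero_mul, mul_zero]; abel)
    | abel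

include h1 h2 in
lemma r22_21 {x y : A} (hx : P22 f x) (hy : P21 f y) : P21 f (x*y) := by
  constructor
  · rw [G1 h1, hx.2, hx.1, hy.1]
    first
    | (simp only [zero_mul, mul_zero]; abel)
    | abel
  · rw [G2 h2, hx.2, hy.2, hy.1]
    first
    | (simp only [zero_mul, mul_zero]; abel)
    | abel

include h1 h2 in
lemma r12_22 {x y : A} (hx : P12 f x) (hy : P22 f y) : P12 f (x*y) := by
  constructor
  · rw [G1 h1, hx.2, hx.1, hy.1]
    first
    | (simp only [zero_mul, mul_zero]; abel)
    | abel
  · rw [G2 h2, hx.2, hy.2, hy.1]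
    first
    | (simp only [zero_mul, mul_zero]; abel)
    | abel

include h1 h2 in
lemma r22_22 {x y : A} (hx : P22 f x) (hy : P22 f y) : P22 f (x*y) := by
  constructor
  · rw [G1 h1, hx.2, hx.1, hy.1]
    first
    | (simp only [zero_mul, mul_zero]; abel)
    | abel
  · rw [G2 h2, hx.2, hy.2, hy.1]
    first
    | (simp only [zero_mul, mul_zero]; abel)
    | abel

end Peirce

section PeirceStar

variable {f : A} (hfs : star f = f)

include hfs in
lemma s11 {x : A} (hx : P11 f x) : P11 f (star x) := by
  constructor
  · rw [← hfs, ← star_mul, hx.2]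
  · rw [← hfs, ← star_mul, hx.1]

include hfs in
lemma s12 {x : A} (hx : P12 f x) : P21 f (star x) := by
  constructor
  · rw [← hfs, ← star_mul, hx.2, star_zero]
  · rw [← hfs, ← star_mul, hx.1]

include hfs in
lemma s21 {x : A} (hx : P21 f x) : P12 f (star x) := by
  constructor
  · rw [← hfs, ← star_mul, hx.2]
  · rw [← hfs, ← star_mul, hx.1, star_zero]

include hfs in
lemma s22 {x : A} (hx : P22 f x) : P22 f (star x) := by
  constructor
  · rw [← hfs, ← star_mul, hx.2, star_zero]
  · rw [← hfs, ← star_mul, hx.1, star_zero]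

end PeirceStar

section PeirceMisc

lemma p11_add {f x y : A} (hx : P11 f x) (hy : P11 f y) : P11 f (x+y) :=
  ⟨by rw [mul_add, hx.1, hy.1], by rw [add_mul, hx.2, hy.2]⟩
lemma p12_add {f x y : A} (hx : P12 f x) (hy : P12 f y) : P12 f (x+y) :=
  ⟨by rw [mul_add, hx.1, hy.1], by rw [add_mul, hx.2, hy.2, add_zero]⟩
lemma p21_add {f x y : A} (hx : P21 f x) (hy : P21 f y) : P21 f (x+y) :=
  ⟨by rw [mul_add, hx.1, hy.1, add_zero], by rw [add_mul, hx.2, hy.2]⟩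
lemma p22_add {f x y : A} (hx : P22 f x) (hy : P22 f y) : P22 f (x+y) :=
  ⟨by rw [mul_add, hx.1, hy.1, add_zero], by rw [add_mul, hx.2, hy.2, add_zero]⟩

lemma p11_smul {f x : A} (c : ℂ) (hx : P11 f x) : P11 f (c • x) :=
  ⟨by rw [mul_smul_comm, hx.1], by rw [smul_mul_assoc, hx.2]⟩
lemma p12_smul {f x : A} (c : ℂ) (hx : P12 f x) : P12 f (c • x) :=
  ⟨by rw [mul_smul_comm, hx.1], by rw [smul_mul_assoc, hx.2, smul_zero]⟩
lemma p21_smul {f x : A} (c : ℂ) (hx : P21 f x) : P21 f (c • x) :=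
  ⟨by rw [mul_smul_comm, hx.1, smul_zero], by rw [smul_mul_assoc, hx.2]⟩
lemma p22_smul {f x : A} (c : ℂ) (hx : P22 f x) : P22 f (c • x) :=
  ⟨by rw [mul_smul_comm, hx.1, smul_zero], by rw [smul_mul_assoc, hx.2, smul_zero]⟩

lemma p11_zero (f : A) : P11 f (0 : A) := ⟨mul_zero f, zero_mul f⟩
lemma p12_zero (f : A) : P12 f (0 : A) := ⟨mul_zero f, zero_mul f⟩
lemma p21_zero (f : A) : P21 f (0 : A) := ⟨mul_zero f, zero_mul f⟩
lemma p22_zero (f : A) : P22 f (0 : A) := ⟨mul_zero f, zero_mul f⟩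

lemma p21_to_p12' {f x : A} (hx : P21 f x) : P12 (1 - f) x :=
  ⟨by rw [sub_mul, one_mul, hx.1, sub_zero], by rw [mul_sub, mul_one, hx.2, sub_self]⟩
lemma p12_to_p21' {f x : A} (hx : P12 f x) : P21 (1 - f) x :=
  ⟨by rw [sub_mul, one_mul, hx.1, sub_self], by rw [mul_sub, mul_one, hx.2, sub_zero]⟩
lemma p22_to_p11' {f x : A} (hx : P22 f x) : P11 (1 - f) x :=
  ⟨by rw [sub_mul, one_mul, hx.1, sub_zero], by rw [mul_sub, mul_one, hx.2, sub_zero]⟩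
lemma p11_to_p22' {f x : A} (hx : P11 f x) : P22 (1 - f) x :=
  ⟨by rw [sub_mul, one_mul, hx.1, sub_self], by rw [mul_sub, mul_one, hx.2, sub_self]⟩

lemma idem_compl {f : A} (hff : f * f = f) : (1 - f) * (1 - f) = 1 - f := by
  rw [mul_sub, mul_one, sub_mul, one_mul, hff, sub_self, sub_zero]

lemma star_compl {f : A} (hfs : star f = f) : star (1 - f) = 1 - f := by
  rw [star_sub, star_one, hfs]

end PeirceMisc

section Kcomp

variable (h1 : ∀ a b : A, a * a * b = a * (a * b))
variable (h2 : ∀ a b : A, b * a * a = b * (a * a))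
variable {f : A} (hff : f * f = f)

/-- Peirce components of a general element. -/
def K11 (f z : A) : A := f * (z * f)
def K12 (f z : A) : A := f * z - f * (z * f)
def K21 (f z : A) : A := z * f - f * (z * f)
def K22 (f z : A) : A := z - f * z - z * f + f * (z * f)

lemma k_decomp (f z : A) : z = K11 f z + K12 f z + K21 f z + K22 f z := by
  simp only [K11, K12, K21, K22]; abel

include h1 h2 hff in
lemma k11_mem (z : A) : P11 f (K11 f z) := by
  constructor
  · exact eabs h1 hff _
  · show (f * (z*f)) * f = f * (z*f)
    rw [flexi h1 h2 f (z*f), rabs h2 hff z]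

include h1 h2 hff in
lemma k12_mem (z : A) : P12 f (K12 f z) := by
  constructor
  · show f * (f*z - f*(z*f)) = _
    rw [mul_sub, eabs h1 hff, eabs h1 hff, K12]
  · show (f*z - f*(z*f)) * f = 0
    rw [sub_mul, flexi h1 h2 f z, flexi h1 h2 f (z*f), rabs h2 hff z, sub_self]

include h1 h2 hff in
lemma k21_mem (z : A) : P21 f (K21 f z) := by
  constructor
  · show f * (z*f - f*(z*f)) = _
    rw [mul_sub, eabs h1 hff, sub_self]
  · show (z*f - f*(z*f)) * f = z*f - f*(z*f)
    rw [sub_mul, flexi h1 h2 f (z*f), rabs h2 hff z]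

include h1 h2 hff in
lemma k22_mem (z : A) : P22 f (K22 f z) := by
  constructor
  · show f * (z - f*z - z*f + f*(z*f)) = _
    rw [mul_add, mul_sub, mul_sub, eabs h1 hff, eabs h1 hff]
    abel
  · show (z - f*z - z*f + f*(z*f)) * f = 0
    rw [add_mul, sub_mul, sub_mul, flexi h1 h2 f z, flexi h1 h2 f (z*f), rabs h2 hff z]
    abel

lemma k11_add (f a b : A) : K11 f (a+b) = K11 f a + K11 f b := by
  simp only [K11, add_mul, mul_add]
lemma k12_add (f a b : A) : K12 f (a+b) = K12 f a + K12 f b := by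
  simp only [K12, add_mul, mul_add]; abel
lemma k21_add (f a b : A) : K21 f (a+b) = K21 f a + K21 f b := by
  simp only [K21, add_mul, mul_add]; abel
lemma k22_add (f a b : A) : K22 f (a+b) = K22 f a + K22 f b := by
  simp only [K22, add_mul, mul_add]; abel

include h1 h2 hff in
/-- If `f u + u f = 0` for an idempotent `f` then `f u = 0` and `u f = 0`. -/
lemma sjIdemZero {u : A} (h : f * u + u * f = 0) : f * u = 0 ∧ u * f = 0 := by
  have hl : f*u + f*(u*f) = 0 := by
    have := congrArg (fun w => f * w) h
    simpa [mul_add, eabs h1 hff] using this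
  have hr : f*(u*f) + u*f = 0 := by
    have := congrArg (fun w => w * f) h
    simpa [add_mul, rabs h2 hff, flexi h1 h2] using this
  have heq : f * u = u * f := by
    have hs := sub_eq_zero.mpr (hl.trans hr.symm)
    have h2' : f*u - u*f = 0 := by rw [← hs]; abel
    exact sub_eq_zero.mp h2'
  have hfu : f * u = 0 := by
    have h3 : f*(u*f) = f*u := by rw [← heq, eabs h1 hff]
    rw [h3] at hl
    exact half_zero _ hl
  exact ⟨hfu, heq ▸ hfu⟩

include h1 h2 hff in
/-- If `f u + u f = u` for an idempotent `f` then `f*u ∈ P12`, `u*f ∈ P21`. -/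
lemma offdiag_of {u : A} (h : f * u + u * f = u) :
    P12 f (f*u) ∧ P21 f (u*f) := by
  have hc : f * (u * f) = 0 := by
    have hl := congrArg (fun w => f * w) h
    simp only [mul_add, eabs h1 hff] at hl
    have hl' : f*u + f*(u*f) = f*u + 0 := by rw [add_zero]; exact hl
    exact add_left_cancel hl'
  constructor
  · exact ⟨eabs h1 hff u, by rw [flexi h1 h2, hc]⟩
  · exact ⟨hc, rabs h2 hff u⟩

end Kcomp
/-! ### The abstract functional-equation development -/

/-- Additivity defect. -/
def Dd (Φ : A → A) (a b : A) : A := Φ (a + b) - Φ a - Φ b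

/-- Interface extracted from the `*`-Jordan `n`-derivation identity. -/
structure Setup (Φ : A → A) (c : ℂ) (S : A → A → A) : Prop where
  hc : c ≠ 0
  key : ∀ x y : A, Φ (c • starJordan x y)
      = S x y + c • starJordan (Φ x) y + c • starJordan x (Φ y)
  Sl : ∀ x y y' : A, S x (y + y') = S x y + S x y'
  Sr : ∀ x x' y : A, S (x + x') y = S x y + S x' y
  Fz : Φ 0 = 0

section Abstract

variable {Φ : A → A} {c : ℂ} {S : A → A → A}

lemma Dd_comm (Φ : A → A) (a b : A) : Dd Φ a b = Dd Φ b a := by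
  unfold Dd; rw [add_comm]; abel

lemma Dd_zero_right (st : Setup Φ c S) (a : A) : Dd Φ a 0 = 0 := by
  unfold Dd; rw [add_zero, st.Fz, sub_zero, sub_self]

lemma Dd_zero_left (st : Setup Φ c S) (b : A) : Dd Φ 0 b = 0 := by
  rw [Dd_comm]; exact Dd_zero_right st b

lemma Dd_split {a b : A} (h : Dd Φ a b = 0) : Φ (a + b) = Φ a + Φ b := by
  unfold Dd at h; rw [sub_sub, sub_eq_zero] at h; exact h

lemma sj_sub_left (a b y : A) : starJordan (a - b) y = starJordan a y - starJordan b y := by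
  simp only [starJordan, sub_mul, mul_sub, star_sub]; abel

lemma rel2 (st : Setup Φ c S) (x a b : A) :
    Dd Φ (c • starJordan x a) (c • starJordan x b) = c • starJordan x (Dd Φ a b) := by
  have hsum : c • starJordan x a + c • starJordan x b = c • starJordan x (a + b) := by
    rw [sj_add_right, smul_add]
  unfold Dd
  rw [hsum, st.key, st.key, st.key]
  rw [sj_sub_right, sj_sub_right, smul_sub, smul_sub]
  rw [st.Sl, sj_add_right (Φ x) a b, smul_add]
  abel

lemma rel2' (st : Setup Φ c S) (a b y : A) :
    Dd Φ (c • starJordan a y) (c • starJordan b y) = c • starJordan (Dd Φ a b) y := by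
  have hsum : c • starJordan a y + c • starJordan b y = c • starJordan (a + b) y := by
    rw [sj_add_left, smul_add]
  unfold Dd
  rw [hsum, st.key, st.key, st.key]
  rw [sj_sub_left, sj_sub_left, smul_sub, smul_sub]
  rw [st.Sr, sj_add_left a b (Φ y), smul_add]
  abel

lemma rel3 (st : Setup Φ c S) (x a b d : A) :
    Φ (c • starJordan x (a + b + d)) - Φ (c • starJordan x a)
      - Φ (c • starJordan x b) - Φ (c • starJordan x d)
    = c • starJordan x (Φ (a + b + d) - Φ a - Φ b - Φ d) := by
  rw [st.key, st.key, st.key, st.key]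
  rw [st.Sl x (a+b) d, st.Sl x a b]
  rw [sj_add_right (Φ x) (a+b) d, sj_add_right (Φ x) a b]
  rw [sj_sub_right, sj_sub_right, sj_sub_right, smul_sub, smul_sub, smul_sub]
  simp only [smul_add]
  abel

lemma kill_r (st : Setup Φ c S) {x b : A} (hb : starJordan x b = 0) (a : A) :
    starJordan x (Dd Φ a b) = 0 := by
  have h := rel2 st x a b
  rw [hb, smul_zero, Dd_zero_right st] at h
  exact smul_cancel st.hc h.symm

lemma kill_l (st : Setup Φ c S) {x a : A} (ha : starJordan x a = 0) (b : A) :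
    starJordan x (Dd Φ a b) = 0 := by
  rw [Dd_comm]; exact kill_r st ha b

lemma kill2_r (st : Setup Φ c S) {b y : A} (hb : starJordan b y = 0) (a : A) :
    starJordan (Dd Φ a b) y = 0 := by
  have h := rel2' st a b y
  rw [hb, smul_zero, Dd_zero_right st] at h
  exact smul_cancel st.hc h.symm

lemma kill2_l (st : Setup Φ c S) {a y : A} (ha : starJordan a y = 0) (b : A) :
    starJordan (Dd Φ a b) y = 0 := by
  rw [Dd_comm]; exact kill2_r st ha b

/-! ### Special annihilation computations -/

lemma sj_compl_P11 {f a : A} (hfs : star f = f) (ha : P11 f a) : starJordan (1-f) a = 0 := by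
  show (1-f)*a + a * star (1-f) = 0
  rw [star_compl hfs, sub_mul, one_mul, ha.1, sub_self, mul_sub, mul_one, ha.2, sub_self,
    add_zero]

lemma star_ff1 {f : A} (hfs : star f = f) : star (f + f - 1) = f + f - 1 := by
  rw [star_sub, star_add, star_one, hfs]

lemma sj_ff1_P12 {f b : A} (hfs : star f = f) (hb : P12 f b) : starJordan (f+f-1) b = 0 := by
  show (f+f-1)*b + b*star (f+f-1) = 0
  rw [star_ff1 hfs, sub_mul, add_mul, hb.1, mul_sub, mul_add, hb.2, one_mul, mul_one]
  abel

lemma sj_ff1_P21 {f b : A} (hfs : star f = f) (hb : P21 f b) : starJordan (f+f-1) b = 0 := by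
  show (f+f-1)*b + b*star (f+f-1) = 0
  rw [star_ff1 hfs, sub_mul, add_mul, hb.1, mul_sub, mul_add, hb.2, one_mul, mul_one]
  abel

lemma sj_P12_P11 (h1 : ∀ a b : A, a * a * b = a * (a * b))
    (h2 : ∀ a b : A, b * a * a = b * (a * a)) {f : A} (hff : f*f = f) (hfs : star f = f)
    {a t : A} (ha : P12 f a) (ht : P11 f t) : starJordan a t = 0 := by
  show a*t + t*star a = 0
  rw [r12_11 h2 hff ha ht, r11_21 h1 hff ht (s12 hfs ha), add_zero]

lemma sj_P21_P22 (h1 : ∀ a b : A, a * a * b = a * (a * b))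
    (h2 : ∀ a b : A, b * a * a = b * (a * a)) {f : A} (hff : f*f = f) (hfs : star f = f)
    {cc t : A} (hc : P21 f cc) (ht : P22 f t) : starJordan cc t = 0 := by
  show cc*t + t*star cc = 0
  rw [r21_22 h2 hff hc ht, r22_12 h1 hff ht (s21 hfs hc), add_zero]

lemma diag_vanish {f T : A} (hfs : star f = f)
    (hk : starJordan (f+f-1) T = 0) : f*T + T*f = T := by
  have h3 := hk
  rw [starJordan, star_ff1 hfs, sub_mul, add_mul, one_mul, mul_sub, mul_add, mul_one] at h3
  have h4 : (f*T + T*f - T) + (f*T + T*f - T) = 0 := by rw [← h3]; abel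
  exact sub_eq_zero.mp (half_zero _ h4)

lemma p21_mul_compl {f z : A} (hz : P21 f z) : z * (1 - f) = 0 := by
  rw [mul_sub, mul_one, hz.2, sub_self]

lemma p11_mul_compl {f z : A} (hz : P11 f z) : z * (1 - f) = 0 := by
  rw [mul_sub, mul_one, hz.2, sub_self]

/-! ### The two one-sided annihilation engines -/

lemma Tf_zero (h1 : ∀ a b : A, a * a * b = a * (a * b))
    (h2 : ∀ a b : A, b * a * a = b * (a * a)) {f : A} (hff : f*f = f) (hfs : star f = f)
    (hsp : ∀ x : A, (∀ r : A, x * r * f = 0) → x = 0)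
    {T : A} (hU : f*T + T*f = T)
    (hkill : ∀ t : A, P11 f t → starJordan T t = 0) : T * f = 0 := by
  obtain ⟨hu12, hv21⟩ := offdiag_of h1 h2 hff hU
  have hvt : ∀ t : A, P11 f t → (T*f) * t = 0 := by
    intro t ht
    have h6 := hkill t ht
    rw [starJordan] at h6
    rw [show T = f*T + T*f from hU.symm] at h6
    rw [add_mul, star_add, mul_add] at h6
    rw [r12_11 h2 hff hu12 ht, r11_21 h1 hff ht (s12 hfs hu12)] at h6
    rw [zero_add, zero_add] at h6
    have h7 := congrArg (fun w => w * f) h6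
    simp only [add_mul, zero_mul] at h7
    rw [(r21_11 h1 h2 hv21 ht).2, (r11_12 h1 h2 ht (s21 hfs hv21)).2, add_zero] at h7
    exact h7
  apply hsp
  intro r
  rw [k_decomp f r, mul_add, mul_add, mul_add]
  rw [hvt _ (k11_mem h1 h2 hff r), r21_22 h2 hff hv21 (k22_mem h1 h2 hff r)]
  rw [zero_add, add_zero, add_mul]
  rw [(r21_12 h1 h2 hv21 (k12_mem h1 h2 hff r)).2,
    (r21_21 h1 h2 hv21 (k21_mem h1 h2 hff r)).2, add_zero]

lemma fT_zero (h1 : ∀ a b : A, a * a * b = a * (a * b))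
    (h2 : ∀ a b : A, b * a * a = b * (a * a)) {f : A} (hff : f*f = f) (hfs : star f = f)
    (hcl : ∀ x : A, (∀ r : A, x * r * (1-f) = 0) → x = 0)
    {T : A} (hU : f*T + T*f = T)
    (hkill : ∀ t : A, P22 f t → starJordan T t = 0) : f * T = 0 := by
  obtain ⟨hu12, hv21⟩ := offdiag_of h1 h2 hff hU
  have hut : ∀ t : A, P22 f t → (f*T) * t = 0 := by
    intro t ht
    have h6 := hkill t ht
    rw [starJordan] at h6
    rw [show T = f*T + T*f from hU.symm] at h6
    rw [add_mul, star_add, mul_add] at h6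
    rw [r21_22 h2 hff hv21 ht, r22_12 h1 hff ht (s21 hfs hv21)] at h6
    rw [add_zero, add_zero] at h6
    have h7 := congrArg (fun w => f * w) h6
    simp only [mul_add, mul_zero] at h7
    rw [(r12_22 h1 h2 hu12 ht).1, (r22_21 h1 h2 ht (s12 hfs hu12)).1, add_zero] at h7
    exact h7
  apply hcl
  intro r
  rw [k_decomp f r, mul_add, mul_add, mul_add]
  rw [r12_11 h2 hff hu12 (k11_mem h1 h2 hff r), hut _ (k22_mem h1 h2 hff r)]
  rw [zero_add, add_zero, add_mul]
  rw [p21_mul_compl (r12_12 h1 h2 hu12 (k12_mem h1 h2 hff r)),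
    p11_mul_compl (r12_21 h1 h2 hu12 (k21_mem h1 h2 hff r)), add_zero]

end Abstract
section Claims

variable {Φ : A → A} {c : ℂ} {S : A → A → A}
variable (h1 : ∀ a b : A, a * a * b = a * (a * b))
variable (h2 : ∀ a b : A, b * a * a = b * (a * a))

include h1 h2 in
lemma claimP3 (st : Setup Φ c S) {f : A} (hff : f*f = f) (hfs : star f = f)
    {a w12 w21 : A} (ha : P11 f a) (hw12 : P12 f w12) (hw21 : P21 f w21) :
    Dd Φ a (w12 + w21) = 0 := by
  have hk1 : starJordan (1-f) (Dd Φ a (w12 + w21)) = 0 :=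
    kill_l st (sj_compl_P11 hfs ha) _
  have hk2 : starJordan (f+f-1) (Dd Φ a (w12 + w21)) = 0 := by
    apply kill_r st _ a
    rw [sj_add_right, sj_ff1_P12 hfs hw12, sj_ff1_P21 hfs hw21, add_zero]
  have h0 : (1-f)*(Dd Φ a (w12+w21)) + (Dd Φ a (w12+w21))*(1-f) = 0 := by
    have := hk1; rwa [starJordan, star_compl hfs] at this
  obtain ⟨hl, hr⟩ := sjIdemZero h1 h2 (idem_compl hff) h0
  have hfT : f*(Dd Φ a (w12+w21)) = Dd Φ a (w12+w21) := by
    rw [sub_mul, one_mul, sub_eq_zero] at hl; exact hl.symm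
  have hTf : (Dd Φ a (w12+w21))*f = Dd Φ a (w12+w21) := by
    rw [mul_sub, mul_one, sub_eq_zero] at hr; exact hr.symm
  have h3 := diag_vanish hfs hk2
  rw [hfT, hTf] at h3
  have h4 : Dd Φ a (w12+w21) + Dd Φ a (w12+w21)
      = Dd Φ a (w12+w21) + 0 := by rw [add_zero]; exact h3
  exact add_left_cancel ((add_comm _ _).trans h4)

include h1 h2 in
lemma claimP2 (st : Setup Φ c S) {f : A} (hff : f*f = f) (hfs : star f = f)
    (hsp : ∀ x : A, (∀ r : A, x * r * f = 0) → x = 0)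
    (hcl : ∀ x : A, (∀ r : A, x * r * (1-f) = 0) → x = 0)
    {b cc : A} (hb : P12 f b) (hcc : P21 f cc) : Dd Φ b cc = 0 := by
  have hU : f*(Dd Φ b cc) + (Dd Φ b cc)*f = Dd Φ b cc :=
    diag_vanish hfs (kill_l st (sj_ff1_P12 hfs hb) cc)
  have hv0 : (Dd Φ b cc) * f = 0 :=
    Tf_zero h1 h2 hff hfs hsp hU
      (fun t ht => kill2_l st (sj_P12_P11 h1 h2 hff hfs hb ht) cc)
  have hu0 : f * (Dd Φ b cc) = 0 :=
    fT_zero h1 h2 hff hfs hcl hU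
      (fun t ht => kill2_r st (sj_P21_P22 h1 h2 hff hfs hcc ht) b)
  rw [← hU, hu0, hv0, add_zero]

include h1 h2 in
lemma claimP4 (st : Setup Φ c S) {f : A} (hff : f*f = f) (hfs : star f = f)
    {z11 z12 z21 z22 : A}
    (m11 : P11 f z11) (m12 : P12 f z12) (m21 : P21 f z21) (m22 : P22 f z22) :
    Φ (z11 + z12 + z21 + z22) = Φ z11 + Φ (z12 + z21) + Φ z22 := by
  set w := z12 + z21 with hw
  have hsum : z11 + z12 + z21 + z22 = z11 + w + z22 := by rw [hw]; abel
  rw [hsum]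
  have hf1 : starJordan f z11 = z11 + z11 := by
    show f*z11 + z11*star f = _; rw [hfs, m11.1, m11.2]
  have hfw : starJordan f w = w := by
    show f*w + w*star f = w
    rw [hfs, hw, mul_add, add_mul, m12.1, m21.1, m12.2, m21.2]; abel
  have hf2 : starJordan f z22 = 0 := by
    show f*z22 + z22*star f = 0; rw [hfs, m22.1, m22.2, add_zero]
  have h3 := rel3 st f z11 w z22
  have hsjsum : starJordan f (z11 + w + z22) = (z11 + z11) + w := by
    rw [sj_add_right, sj_add_right, hf1, hfw, hf2, add_zero]
  have hsplit : Φ (c • starJordan f (z11 + w + z22)) = Φ (c • (z11+z11)) + Φ (c • w) := by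
    rw [hsjsum, smul_add]
    have hd := claimP3 h1 h2 st hff hfs (a := c • (z11+z11)) (w12 := c • z12)
      (w21 := c • z21) (p11_smul c (p11_add m11 m11)) (p12_smul c m12) (p21_smul c m21)
    have h' : c • z12 + c • z21 = c • w := by rw [hw, smul_add]
    rw [h'] at hd
    exact Dd_split hd
  have hLHS0 : Φ (c • starJordan f (z11+w+z22)) - Φ (c • starJordan f z11)
      - Φ (c • starJordan f w) - Φ (c • starJordan f z22) = 0 := by
    rw [hsplit, hf1, hfw, hf2, smul_zero, st.Fz]
    abel
  rw [hLHS0] at h3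
  have hsjf : starJordan f (Φ (z11+w+z22) - Φ z11 - Φ w - Φ z22) = 0 :=
    smul_cancel st.hc h3.symm
  obtain ⟨hfX, _⟩ := sjIdemZero h1 h2 hff (by rwa [starJordan, hfs] at hsjf)
  -- now the (1-f) side
  have hc1 : starJordan (1-f) z11 = 0 := sj_compl_P11 hfs m11
  have hcw : starJordan (1-f) w = w := by
    show (1-f)*w + w*star (1-f) = w
    rw [star_compl hfs, hw, mul_add, add_mul, sub_mul, sub_mul, one_mul, one_mul,
      mul_sub, mul_sub, mul_one, mul_one, m12.1, m21.1, m12.2, m21.2]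
    abel
  have hc2 : starJordan (1-f) z22 = z22 + z22 := by
    show (1-f)*z22 + z22*star (1-f) = _
    rw [star_compl hfs, sub_mul, one_mul, m22.1, mul_sub, mul_one, m22.2]
    abel
  have h3' := rel3 st (1-f) z11 w z22
  have hsjsum' : starJordan (1-f) (z11 + w + z22) = (z22 + z22) + w := by
    rw [sj_add_right, sj_add_right, hc1, hcw, hc2, zero_add, add_comm]
  have hsplit' : Φ (c • starJordan (1-f) (z11 + w + z22))
      = Φ (c • (z22+z22)) + Φ (c • w) := by
    rw [hsjsum', smul_add]
    have hd := claimP3 h1 h2 st (idem_compl hff) (star_compl hfs)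
      (a := c • (z22+z22)) (w12 := c • z21) (w21 := c • z12)
      (p22_to_p11' (p22_smul c (p22_add m22 m22)))
      (p21_to_p12' (p21_smul c m21)) (p12_to_p21' (p12_smul c m12))
    have h' : c • z21 + c • z12 = c • w := by rw [hw, smul_add, add_comm]
    rw [h'] at hd
    exact Dd_split hd
  have hLHS0' : Φ (c • starJordan (1-f) (z11+w+z22)) - Φ (c • starJordan (1-f) z11)
      - Φ (c • starJordan (1-f) w) - Φ (c • starJordan (1-f) z22) = 0 := by
    rw [hsplit', hc1, hcw, hc2, smul_zero, st.Fz]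
    abel
  rw [hLHS0'] at h3'
  have hsjf' : starJordan (1-f) (Φ (z11+w+z22) - Φ z11 - Φ w - Φ z22) = 0 :=
    smul_cancel st.hc h3'.symm
  obtain ⟨hfX', _⟩ := sjIdemZero h1 h2 (idem_compl hff)
    (by rwa [starJordan, star_compl hfs] at hsjf')
  -- combine: (1-f)*X = 0 and f*X = 0 imply X = 0
  rw [sub_mul, one_mul, hfX, sub_zero] at hfX'
  -- hfX' : X = 0
  have hX := hfX'
  rw [sub_sub, sub_sub, sub_eq_zero] at hX
  rw [hX]; abel

include h1 h2 in
lemma claimP4s (st : Setup Φ c S) {f : A} (hff : f*f = f) (hfs : star f = f)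
    (hsp : ∀ x : A, (∀ r : A, x * r * f = 0) → x = 0)
    (hcl : ∀ x : A, (∀ r : A, x * r * (1-f) = 0) → x = 0)
    {z11 z12 z21 z22 : A}
    (m11 : P11 f z11) (m12 : P12 f z12) (m21 : P21 f z21) (m22 : P22 f z22) :
    Φ (z11 + z12 + z21 + z22) = Φ z11 + Φ z12 + Φ z21 + Φ z22 := by
  rw [claimP4 h1 h2 st hff hfs m11 m12 m21 m22,
    Dd_split (claimP2 h1 h2 st hff hfs hsp hcl m12 m21)]
  abel

end Claims
section Claims2

variable {Φ : A → A} {c : ℂ} {S : A → A → A}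
variable (h1 : ∀ a b : A, a * a * b = a * (a * b))
variable (h2 : ∀ a b : A, b * a * a = b * (a * a))

include h1 h2 in
lemma claimBB (st : Setup Φ c S) {f : A} (hff : f*f = f) (hfs : star f = f)
    (hsp : ∀ x : A, (∀ r : A, x * r * f = 0) → x = 0)
    (hcl : ∀ x : A, (∀ r : A, x * r * (1-f) = 0) → x = 0)
    {a b t : A} (ha : P12 f a) (hb : P12 f b) (ht : P22 f t) :
    Dd Φ (c • (b * star t)) (c • a) + Dd Φ (c • (a * b)) (c • (star a)) = 0 := by
  have hDbe2 : Dd Φ b (1-f) = 0 := by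
    have hd := claimP3 h1 h2 st (idem_compl hff) (star_compl hfs)
      (a := (1-f)) (w12 := (0:A)) (w21 := b)
      ⟨idem_compl hff, idem_compl hff⟩ (p12_zero _) (p12_to_p21' hb)
    rw [zero_add] at hd
    rw [Dd_comm]; exact hd
  have hrel := rel2 st (a + t) b (1-f)
  rw [hDbe2, sj_zero_right, smul_zero] at hrel
  have hfact := Dd_split hrel
  -- compute the two star-Jordan products
  have hxb : starJordan (a+t) b = b*star a + b*star t + a*b := by
    show (a+t)*b + b*star (a+t) = _
    rw [add_mul, star_add, mul_add, r22_12 h1 hff ht hb]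
    abel
  have hxe : starJordan (a+t) (1-f) = a + star a + (t + star t) := by
    show (a+t)*(1-f) + (1-f)*star (a+t) = _
    rw [star_add, mul_sub, mul_one, add_mul, ha.2, ht.2, sub_mul, one_mul, mul_add,
      (s12 hfs ha).1, (s22 hfs ht).1]
    abel
  -- expansions
  have hE1 : Φ (c • starJordan (a+t) b)
      = Φ (c•(b*star a)) + Φ (c•(b*star t)) + Φ (c•(a*b)) := by
    have h4 := claimP4s h1 h2 st hff hfs hsp hcl
      (p11_smul c (r12_21 h1 h2 hb (s12 hfs ha)))
      (p12_smul c (r12_22 h1 h2 hb (s22 hfs ht)))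
      (p21_smul c (r12_12 h1 h2 ha hb))
      (p22_zero f)
    rw [st.Fz, add_zero, add_zero] at h4
    calc Φ (c • starJordan (a+t) b)
        = Φ (c•(b*star a) + c•(b*star t) + c•(a*b)) := by
          rw [hxb, smul_add, smul_add]
      _ = _ := h4
  have hE2 : Φ (c • starJordan (a+t) (1-f))
      = Φ (c•a) + Φ (c•(star a)) + Φ (c•(t+star t)) := by
    have h4 := claimP4s h1 h2 st hff hfs hsp hcl
      (p11_zero f) (p12_smul c ha) (p21_smul c (s12 hfs ha))
      (p22_smul c (p22_add ht (s22 hfs ht)))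
    rw [st.Fz] at h4
    simp only [zero_add] at h4
    calc Φ (c • starJordan (a+t) (1-f))
        = Φ (c•a + c•(star a) + c•(t+star t)) := by rw [hxe, smul_add, smul_add]
      _ = _ := h4
  have hE12 : Φ (c • starJordan (a+t) b + c • starJordan (a+t) (1-f))
      = Φ (c•(b*star a)) + Φ (c•(b*star t) + c•a) + Φ (c•(a*b) + c•(star a))
        + Φ (c•(t+star t)) := by
    have h4 := claimP4s h1 h2 st hff hfs hsp hcl
      (p11_smul c (r12_21 h1 h2 hb (s12 hfs ha)))
      (p12_add (p12_smul c (r12_22 h1 h2 hb (s22 hfs ht))) (p12_smul c ha))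
      (p21_add (p21_smul c (r12_12 h1 h2 ha hb)) (p21_smul c (s12 hfs ha)))
      (p22_smul c (p22_add ht (s22 hfs ht)))
    calc Φ (c • starJordan (a+t) b + c • starJordan (a+t) (1-f))
        = Φ (c•(b*star a) + (c•(b*star t) + c•a) + (c•(a*b) + c•(star a))
            + c•(t+star t)) := by
          rw [hxb, hxe]; simp only [smul_add]; rw [show
            c•(b*star a) + c•(b*star t) + c•(a*b) + (c•a + c•(star a) + (c•t + c•(star t)))
            = c•(b*star a) + (c•(b*star t) + c•a) + (c•(a*b) + c•(star a))
              + (c•t + c•(star t)) from by abel]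
      _ = _ := h4
  rw [hE12, hE1, hE2] at hfact
  have hgoal : Dd Φ (c•(b*star t)) (c•a) + Dd Φ (c•(a*b)) (c•(star a))
      = (Φ (c•(b*star a)) + Φ (c•(b*star t) + c•a) + Φ (c•(a*b) + c•(star a))
          + Φ (c•(t+star t)))
        - ((Φ (c•(b*star a)) + Φ (c•(b*star t)) + Φ (c•(a*b)))
          + (Φ (c•a) + Φ (c•(star a)) + Φ (c•(t+star t)))) := by
    simp only [Dd]; abel
  rw [hgoal, hfact, sub_self]

include h1 h2 in
lemma claimBB0 (st : Setup Φ c S) {f : A} (hff : f*f = f) (hfs : star f = f)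
    (hsp : ∀ x : A, (∀ r : A, x * r * f = 0) → x = 0)
    (hcl : ∀ x : A, (∀ r : A, x * r * (1-f) = 0) → x = 0)
    {a b : A} (ha : P12 f a) (hb : P12 f b) :
    Dd Φ (c • (a * b)) (c • (star a)) = 0 := by
  have h := claimBB h1 h2 st hff hfs hsp hcl ha hb (p22_zero f)
  rw [star_zero, mul_zero, smul_zero, Dd_zero_left st, zero_add] at h
  exact h

include h1 h2 in
lemma claimBBt (st : Setup Φ c S) {f : A} (hff : f*f = f) (hfs : star f = f)
    (hsp : ∀ x : A, (∀ r : A, x * r * f = 0) → x = 0)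
    (hcl : ∀ x : A, (∀ r : A, x * r * (1-f) = 0) → x = 0)
    {a b t : A} (ha : P12 f a) (hb : P12 f b) (ht : P22 f t) :
    Dd Φ (c • (b * star t)) (c • a) = 0 := by
  have h := claimBB h1 h2 st hff hfs hsp hcl ha hb ht
  rw [claimBB0 h1 h2 st hff hfs hsp hcl ha hb, add_zero] at h
  exact h

include h1 h2 in
lemma claimP5X (st : Setup Φ c S) {f : A} (hff : f*f = f) (hfs : star f = f)
    (hsp : ∀ x : A, (∀ r : A, x * r * f = 0) → x = 0)
    (hcl : ∀ x : A, (∀ r : A, x * r * (1-f) = 0) → x = 0)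
    {u s v : A} (hu : P12 f u) (hs : P22 f s) (hv : P12 f v) :
    Dd Φ (u * s) v = 0 := by
  have hbt := claimBBt h1 h2 st hff hfs hsp hcl
    (a := c⁻¹ • v) (b := c⁻¹ • u) (t := star s)
    (p12_smul _ hv) (p12_smul _ hu) (s22 hfs hs)
  rw [star_star] at hbt
  have e1 : c • ((c⁻¹ • u) * s) = u * s := by
    rw [smul_mul_assoc, smul_smul, mul_inv_cancel₀ st.hc, one_smul]
  have e2 : c • (c⁻¹ • v) = v := by
    rw [smul_smul, mul_inv_cancel₀ st.hc, one_smul]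
  rw [e1, e2] at hbt
  exact hbt

include h1 h2 in
lemma claimP5 (st : Setup Φ c S) {f : A} (hff : f*f = f) (hfs : star f = f)
    (hsp : ∀ x : A, (∀ r : A, x * r * f = 0) → x = 0)
    (hcl : ∀ x : A, (∀ r : A, x * r * (1-f) = 0) → x = 0)
    {a b : A} (ha : P12 f a) (hb : P12 f b) : Dd Φ a b = 0 := by
  have hU : f*(Dd Φ a b) + (Dd Φ a b)*f = Dd Φ a b :=
    diag_vanish hfs (kill_l st (sj_ff1_P12 hfs ha) b)
  have hv0 : (Dd Φ a b) * f = 0 :=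
    Tf_zero h1 h2 hff hfs hsp hU
      (fun t ht => kill2_l st (sj_P12_P11 h1 h2 hff hfs ha ht) b)
  have hfT : f * (Dd Φ a b) = Dd Φ a b := by
    rw [hv0, add_zero] at hU; exact hU
  have hT12 : P12 f (Dd Φ a b) := ⟨hfT, hv0⟩
  have hTs : ∀ s : A, P22 f s → (Dd Φ a b) * s = 0 := by
    intro s hs
    have hx : starJordan (star s) a = a * s := by
      show (star s)*a + a*star (star s) = a*s
      rw [star_star, r22_12 h1 hff (s22 hfs hs) ha, zero_add]
    have hxb : starJordan (star s) b = b * s := by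
      show (star s)*b + b*star (star s) = b*s
      rw [star_star, r22_12 h1 hff (s22 hfs hs) hb, zero_add]
    have h := rel2 st (star s) a b
    rw [hx, hxb] at h
    have hz : Dd Φ (c • (a*s)) (c • (b*s)) = 0 := by
      have := claimP5X h1 h2 st hff hfs hsp hcl
        (p12_smul c ha) hs (p12_smul c (r12_22 h1 h2 hb hs))
      rwa [smul_mul_assoc] at this
    rw [hz] at h
    have hsj : starJordan (star s) (Dd Φ a b) = 0 := smul_cancel st.hc h.symm
    have hexp : (star s)*(Dd Φ a b) + (Dd Φ a b)*s = 0 := by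
      have := hsj; rwa [starJordan, star_star] at this
    rwa [r22_12 h1 hff (s22 hfs hs) hT12, zero_add] at hexp
  apply hcl
  intro r
  rw [k_decomp f r, mul_add, mul_add, mul_add]
  rw [r12_11 h2 hff hT12 (k11_mem h1 h2 hff r), hTs _ (k22_mem h1 h2 hff r)]
  rw [zero_add, add_zero, add_mul]
  rw [p21_mul_compl (r12_12 h1 h2 hT12 (k12_mem h1 h2 hff r)),
    p11_mul_compl (r12_21 h1 h2 hT12 (k21_mem h1 h2 hff r)), add_zero]

include h1 h2 in
lemma claimP6 (st : Setup Φ c S) {f : A} (hff : f*f = f) (hfs : star f = f)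
    (hsp : ∀ x : A, (∀ r : A, x * r * f = 0) → x = 0)
    (hcl : ∀ x : A, (∀ r : A, x * r * (1-f) = 0) → x = 0)
    {a b : A} (ha : P11 f a) (hb : P11 f b) : Dd Φ a b = 0 := by
  have hk : starJordan (1-f) (Dd Φ a b) = 0 := kill_l st (sj_compl_P11 hfs ha) b
  obtain ⟨hl, hr⟩ := sjIdemZero h1 h2 (idem_compl hff)
    (by rwa [starJordan, star_compl hfs] at hk)
  have hfT : f * (Dd Φ a b) = Dd Φ a b := by
    rw [sub_mul, one_mul, sub_eq_zero] at hl; exact hl.symm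
  have hTf : (Dd Φ a b) * f = Dd Φ a b := by
    rw [mul_sub, mul_one, sub_eq_zero] at hr; exact hr.symm
  have hT11 : P11 f (Dd Φ a b) := ⟨hfT, hTf⟩
  have hTt : ∀ t : A, P12 f t → (Dd Φ a b) * t = 0 := by
    intro t ht
    have hsja : starJordan a t = a * t := by
      show a*t + t*star a = a*t
      rw [r12_11 h2 hff ht (s11 hfs ha), add_zero]
    have hsjb : starJordan b t = b * t := by
      show b*t + t*star b = b*t
      rw [r12_11 h2 hff ht (s11 hfs hb), add_zero]
    have h := rel2' st a b t
    rw [hsja, hsjb] at h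
    have hz : Dd Φ (c • (a*t)) (c • (b*t)) = 0 :=
      claimP5 h1 h2 st hff hfs hsp hcl
        (p12_smul c (r11_12 h1 h2 ha ht)) (p12_smul c (r11_12 h1 h2 hb ht))
    rw [hz] at h
    have hsj := smul_cancel st.hc h.symm
    have hexp : (Dd Φ a b)*t + t*star (Dd Φ a b) = 0 := by
      have := hsj; rwa [starJordan] at this
    rwa [r12_11 h2 hff ht (s11 hfs hT11), add_zero] at hexp
  apply hcl
  intro r
  rw [k_decomp f r, mul_add, mul_add, mul_add]
  rw [hTt _ (k12_mem h1 h2 hff r), r11_21 h1 hff hT11 (k21_mem h1 h2 hff r),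
    r11_22 h1 hff hT11 (k22_mem h1 h2 hff r)]
  rw [add_zero, add_zero, add_zero]
  exact p11_mul_compl (r11_11 h1 h2 hT11 (k11_mem h1 h2 hff r))

include h1 h2 in
lemma absMain (st : Setup Φ c S) {f : A} (hff : f*f = f) (hfs : star f = f)
    (hsp : ∀ x : A, (∀ r : A, x * r * f = 0) → x = 0)
    (hcl : ∀ x : A, (∀ r : A, x * r * (1-f) = 0) → x = 0) :
    ∀ a b : A, Φ (a + b) = Φ a + Φ b := by
  have hff' := idem_compl hff
  have hfs' := star_compl hfs
  have hsp' : ∀ x : A, (∀ r : A, x * r * (1-f) = 0) → x = 0 := hcl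
  have hcl' : ∀ x : A, (∀ r : A, x * r * (1-(1-f)) = 0) → x = 0 := by
    intro x hx; apply hsp; intro r; have := hx r; rwa [sub_sub_cancel] at this
  intro a b
  have h4ab := claimP4s h1 h2 st hff hfs hsp hcl
    (k11_mem h1 h2 hff (a+b)) (k12_mem h1 h2 hff (a+b))
    (k21_mem h1 h2 hff (a+b)) (k22_mem h1 h2 hff (a+b))
  have h4a := claimP4s h1 h2 st hff hfs hsp hcl
    (k11_mem h1 h2 hff a) (k12_mem h1 h2 hff a)
    (k21_mem h1 h2 hff a) (k22_mem h1 h2 hff a)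
  have h4b := claimP4s h1 h2 st hff hfs hsp hcl
    (k11_mem h1 h2 hff b) (k12_mem h1 h2 hff b)
    (k21_mem h1 h2 hff b) (k22_mem h1 h2 hff b)
  have c11 : Φ (K11 f (a+b)) = Φ (K11 f a) + Φ (K11 f b) := by
    rw [k11_add]
    exact Dd_split (claimP6 h1 h2 st hff hfs hsp hcl
      (k11_mem h1 h2 hff a) (k11_mem h1 h2 hff b))
  have c12 : Φ (K12 f (a+b)) = Φ (K12 f a) + Φ (K12 f b) := by
    rw [k12_add]
    exact Dd_split (claimP5 h1 h2 st hff hfs hsp hcl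
      (k12_mem h1 h2 hff a) (k12_mem h1 h2 hff b))
  have c21 : Φ (K21 f (a+b)) = Φ (K21 f a) + Φ (K21 f b) := by
    rw [k21_add]
    exact Dd_split (claimP5 h1 h2 st hff' hfs' hsp' hcl'
      (p21_to_p12' (k21_mem h1 h2 hff a)) (p21_to_p12' (k21_mem h1 h2 hff b)))
  have c22 : Φ (K22 f (a+b)) = Φ (K22 f a) + Φ (K22 f b) := by
    rw [k22_add]
    exact Dd_split (claimP6 h1 h2 st hff' hfs' hsp' hcl'
      (p22_to_p11' (k22_mem h1 h2 hff a)) (p22_to_p11' (k22_mem h1 h2 hff b)))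
  calc Φ (a+b) = Φ (K11 f (a+b) + K12 f (a+b) + K21 f (a+b) + K22 f (a+b)) := by
        rw [← k_decomp]
    _ = Φ (K11 f (a+b)) + Φ (K12 f (a+b)) + Φ (K21 f (a+b)) + Φ (K22 f (a+b)) := h4ab
    _ = (Φ (K11 f a) + Φ (K11 f b)) + (Φ (K12 f a) + Φ (K12 f b))
        + (Φ (K21 f a) + Φ (K21 f b)) + (Φ (K22 f a) + Φ (K22 f b)) := by
        rw [c11, c12, c21, c22]
    _ = (Φ (K11 f a) + Φ (K12 f a) + Φ (K21 f a) + Φ (K22 f a))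
        + (Φ (K11 f b) + Φ (K12 f b) + Φ (K21 f b) + Φ (K22 f b)) := by abel
    _ = Φ (K11 f a + K12 f a + K21 f a + K22 f a)
        + Φ (K11 f b + K12 f b + K21 f b + K22 f b) := by rw [← h4a, ← h4b]
    _ = Φ a + Φ b := by rw [← k_decomp, ← k_decomp]

end Claims2
/-! ### Concrete evaluation of the iterated star-Jordan products -/

lemma ofFn_split : ∀ (j : ℕ) (g : Fin (j+2) → A),
    List.ofFn g = List.ofFn (fun i : Fin j => g ⟨i.1, by omega⟩)
      ++ [g ⟨j, by omega⟩, g ⟨j+1, by omega⟩]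
  | 0, g => by
    simp [List.ofFn_succ]
  | (j+1), g => by
    rw [List.ofFn_succ]
    rw [ofFn_split j (fun i => g i.succ)]
    rw [List.ofFn_succ (f := fun i : Fin (j+1) => g ⟨i.1, by omega⟩)]
    rw [List.cons_append]
    congr 1

lemma ofFn_ne_nil {n : ℕ} (hn : 0 < n) (f : Fin n → A) : List.ofFn f ≠ [] := by
  simp [← List.length_pos_iff]
  omega

lemma lsj_cons (a : A) (t : List A) : leftStarJordan (a :: t) = t.foldl starJordan a := rfl

lemma lsj_append_pair (l : List A) (hl : l ≠ []) (x y : A) :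
    leftStarJordan (l ++ [x, y]) = starJordan (starJordan (leftStarJordan l) x) y := by
  cases l with
  | nil => exact absurd rfl hl
  | cons a t =>
    rw [List.cons_append, lsj_cons, lsj_cons, List.foldl_append]
    rfl

lemma nsmul_mul_left (K : ℕ) (x y : A) : (K • x) * y = K • (x * y) :=
  (AddMonoidHom.mulRight y).map_nsmul K x

lemma nsmul_mul_right (K : ℕ) (x y : A) : x * (K • y) = K • (x * y) :=
  (AddMonoidHom.mulLeft x).map_nsmul K y

lemma foldl_sj_one : ∀ (j K : ℕ),
    List.foldl starJordan (K • (1:A)) (List.replicate j (1:A)) = (K * 2^j) • (1:A)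
  | 0, K => by simp
  | (j+1), K => by
    rw [List.replicate_succ, List.foldl_cons]
    have hsj : starJordan (K • (1:A)) (1:A) = (K + K) • (1:A) := by
      unfold starJordan
      rw [star_nsmul, star_one, mul_one, one_mul, ← add_nsmul]
    rw [hsj, foldl_sj_one j (K+K)]
    congr 1
    ring

lemma lsj_repl_pair : ∀ (j : ℕ) (x y : A),
    leftStarJordan (List.replicate j (1:A) ++ [x, y]) = (2^j : ℕ) • starJordan x y
  | 0, x, y => by
    simp [leftStarJordan]
  | (j+1), x, y => by
    rw [List.replicate_succ, List.cons_append, lsj_cons, List.foldl_append]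
    have h1 : List.foldl starJordan (1:A) (List.replicate j 1) = (2^j : ℕ) • (1:A) := by
      have h := foldl_sj_one (A := A) j 1
      rw [one_nsmul, one_mul] at h
      exact h
    rw [h1]
    show starJordan (starJordan ((2^j:ℕ) • (1:A)) x) y = _
    have h2 : starJordan ((2^j:ℕ) • (1:A)) x = (2^j:ℕ) • x + (2^j:ℕ) • x := by
      unfold starJordan
      rw [star_nsmul, star_one, nsmul_mul_left, nsmul_mul_right, one_mul, mul_one]
    have h4 : starJordan ((2^j:ℕ) • x) y = (2^j:ℕ) • starJordan x y := by
      unfold starJordan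
      rw [nsmul_mul_left, star_nsmul, nsmul_mul_right, ← nsmul_add]
    rw [h2, sj_add_left, h4, ← add_nsmul]
    congr 1
    rw [pow_succ]
    ring

/-! ### Building the Setup from the hypothesis -/

def dPre (Φ : A → A) (j k : ℕ) : A :=
  leftStarJordan (List.ofFn (fun i : Fin j => if (i:ℕ) = k then Φ 1 else 1))

def Sfun (Φ : A → A) (j : ℕ) : A → A → A := fun x y =>
  ∑ k : Fin (j+2), if (k:ℕ) < j then starJordan (starJordan (dPre Φ j (k:ℕ)) x) y else 0

lemma fam_ofFn (j : ℕ) (x y : A) :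
    List.ofFn (lastTwoFamily (j+2) x y) = List.replicate j (1:A) ++ [x, y] := by
  rw [ofFn_split]
  have hpre : (fun i : Fin j => lastTwoFamily (j+2) x y ⟨i.1, by omega⟩)
      = (fun _ : Fin j => (1:A)) := by
    funext i
    simp only [lastTwoFamily]
    rw [if_neg (by simp; omega), if_neg (by simp; omega)]
  have hj : lastTwoFamily (j+2) x y ⟨j, by omega⟩ = x := by
    simp only [lastTwoFamily]
    rw [if_pos (by simp)]
  have hj1 : lastTwoFamily (j+2) x y ⟨j+1, by omega⟩ = y := by
    simp only [lastTwoFamily]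
    rw [if_neg (by simp), if_pos (by simp)]
  rw [hpre, hj, hj1, List.ofFn_const]

lemma build_setup (Φ : A → A) (j : ℕ)
    (hΦ : ∀ x y : A,
      Φ (leftStarJordan (List.ofFn (lastTwoFamily (j+2) x y))) =
        ∑ k : Fin (j+2), leftStarJordan (List.ofFn
          (Function.update (lastTwoFamily (j+2) x y) k (Φ (lastTwoFamily (j+2) x y k))))) :
    Setup Φ ((2:ℂ)^j) (Sfun Φ j) := by
  have hcast : ∀ z : A, (2^j : ℕ) • z = ((2:ℂ)^j) • z := by
    intro z; rw [← Nat.cast_smul_eq_nsmul ℂ]; norm_num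
  have hkey : ∀ x y : A, Φ (((2:ℂ)^j) • starJordan x y)
      = Sfun Φ j x y + ((2:ℂ)^j) • starJordan (Φ x) y
        + ((2:ℂ)^j) • starJordan x (Φ y) := by
    intro x y
    have hmain := hΦ x y
    rw [fam_ofFn j x y, lsj_repl_pair] at hmain
    have hterm : ∀ k : Fin (j+2),
        leftStarJordan (List.ofFn (Function.update (lastTwoFamily (j+2) x y) k
          (Φ (lastTwoFamily (j+2) x y k))))
        = ((if (k:ℕ) < j then starJordan (starJordan (dPre Φ j (k:ℕ)) x) y else 0)
          + (if (k:ℕ) = j then (2^j : ℕ) • starJordan (Φ x) y else 0)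
          + (if (k:ℕ) = j+1 then (2^j : ℕ) • starJordan x (Φ y) else 0)) := by
      intro k
      have hklt := k.isLt
      by_cases hk1 : (k:ℕ) < j
      · have hfamk : lastTwoFamily (j+2) x y k = 1 := by
          simp only [lastTwoFamily]
          rw [if_neg (by omega), if_neg (by omega)]
        rw [hfamk]
        have hupd : List.ofFn (Function.update (lastTwoFamily (j+2) x y) k (Φ 1))
            = (List.ofFn (fun i : Fin j => if (i:ℕ) = (k:ℕ) then Φ 1 else 1)) ++ [x, y] := by
          rw [ofFn_split]
          have hpre : (fun i : Fin j =>
              Function.update (lastTwoFamily (j+2) x y) k (Φ 1) ⟨i.1, by omega⟩)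
              = (fun i : Fin j => if (i:ℕ) = (k:ℕ) then Φ 1 else 1) := by
            funext i
            rw [Function.update_apply]
            by_cases hik : (i:ℕ) = (k:ℕ)
            · have hfin : (⟨(i:ℕ), by omega⟩ : Fin (j+2)) = k := Fin.ext hik
              rw [if_pos hfin, if_pos hik]
            · have hfin : (⟨(i:ℕ), by omega⟩ : Fin (j+2)) ≠ k :=
                fun h => hik (by simpa using congrArg Fin.val h)
              rw [if_neg hfin, if_neg hik]
              simp only [lastTwoFamily]
              rw [if_neg (by simp; omega), if_neg (by simp; omega)]
          have hj : Function.update (lastTwoFamily (j+2) x y) k (Φ 1) ⟨j, by omega⟩ = x := by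
            rw [Function.update_apply,
              if_neg (fun h => by have := congrArg Fin.val h; simp at this; omega)]
            simp only [lastTwoFamily]
            rw [if_pos (by simp)]
          have hj1 : Function.update (lastTwoFamily (j+2) x y) k (Φ 1) ⟨j+1, by omega⟩ = y := by
            rw [Function.update_apply,
              if_neg (fun h => by have := congrArg Fin.val h; simp at this; omega)]
            simp only [lastTwoFamily]
            rw [if_neg (by simp), if_pos (by simp)]
          rw [hpre, hj, hj1]
        rw [hupd, lsj_append_pair _ (ofFn_ne_nil (by omega) _) x y]
        rw [if_pos hk1, if_neg (by omega), if_neg (by omega), add_zero, add_zero]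
        rfl
      · by_cases hk2 : (k:ℕ) = j
        · have hfamk : lastTwoFamily (j+2) x y k = x := by
            simp only [lastTwoFamily]
            rw [if_pos (by omega)]
          rw [hfamk]
          have hupd : List.ofFn (Function.update (lastTwoFamily (j+2) x y) k (Φ x))
              = List.replicate j (1:A) ++ [Φ x, y] := by
            rw [ofFn_split]
            have hpre : (fun i : Fin j =>
                Function.update (lastTwoFamily (j+2) x y) k (Φ x) ⟨i.1, by omega⟩)
                = (fun _ : Fin j => (1:A)) := by
              funext i
              rw [Function.update_apply,
                if_neg (fun h => by have := congrArg Fin.val h; simp at this; omega)]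
              simp only [lastTwoFamily]
              rw [if_neg (by simp; omega), if_neg (by simp; omega)]
            have hj : Function.update (lastTwoFamily (j+2) x y) k (Φ x) ⟨j, by omega⟩ = Φ x := by
              rw [Function.update_apply, if_pos (Fin.ext (by simp [hk2.symm]))]
            have hj1 : Function.update (lastTwoFamily (j+2) x y) k (Φ x) ⟨j+1, by omega⟩ = y := by
              rw [Function.update_apply,
                if_neg (fun h => by have := congrArg Fin.val h; simp at this; omega)]
              simp only [lastTwoFamily]
              rw [if_neg (by simp), if_pos (by simp)]
            rw [hpre, hj, hj1, List.ofFn_const]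
          rw [hupd, lsj_repl_pair]
          rw [if_neg (by omega), if_pos hk2, if_neg (by omega), zero_add, add_zero]
        · have hk3 : (k:ℕ) = j+1 := by omega
          have hfamk : lastTwoFamily (j+2) x y k = y := by
            simp only [lastTwoFamily]
            rw [if_neg (by omega), if_pos (by omega)]
          rw [hfamk]
          have hupd : List.ofFn (Function.update (lastTwoFamily (j+2) x y) k (Φ y))
              = List.replicate j (1:A) ++ [x, Φ y] := by
            rw [ofFn_split]
            have hpre : (fun i : Fin j =>
                Function.update (lastTwoFamily (j+2) x y) k (Φ y) ⟨i.1, by omega⟩)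
                = (fun _ : Fin j => (1:A)) := by
              funext i
              rw [Function.update_apply,
                if_neg (fun h => by have := congrArg Fin.val h; simp at this; omega)]
              simp only [lastTwoFamily]
              rw [if_neg (by simp; omega), if_neg (by simp; omega)]
            have hj : Function.update (lastTwoFamily (j+2) x y) k (Φ y) ⟨j, by omega⟩ = x := by
              rw [Function.update_apply,
                if_neg (fun h => by have := congrArg Fin.val h; simp at this; omega)]
              simp only [lastTwoFamily]
              rw [if_pos (by simp)]
            have hj1 : Function.update (lastTwoFamily (j+2) x y) k (Φ y) ⟨j+1, by omega⟩
                = Φ y := by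
              rw [Function.update_apply, if_pos (Fin.ext (by simp [hk3.symm]))]
            rw [hpre, hj, hj1, List.ofFn_const]
          rw [hupd, lsj_repl_pair]
          rw [if_neg (by omega), if_neg (by omega), if_pos hk3, zero_add, zero_add]
    rw [Finset.sum_congr rfl (fun k _ => hterm k)] at hmain
    rw [Finset.sum_add_distrib, Finset.sum_add_distrib] at hmain
    have hs2 : (∑ k : Fin (j+2),
        if (k:ℕ) = j then (2^j : ℕ) • starJordan (Φ x) y else 0)
        = (2^j : ℕ) • starJordan (Φ x) y := by
      rw [Finset.sum_eq_single (⟨j, by omega⟩ : Fin (j+2))]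
      · rw [if_pos rfl]
      · intro b _ hb; rw [if_neg (fun h => hb (Fin.ext h))]
      · intro h; exact absurd (Finset.mem_univ _) h
    have hs3 : (∑ k : Fin (j+2),
        if (k:ℕ) = j+1 then (2^j : ℕ) • starJordan x (Φ y) else 0)
        = (2^j : ℕ) • starJordan x (Φ y) := by
      rw [Finset.sum_eq_single (⟨j+1, by omega⟩ : Fin (j+2))]
      · rw [if_pos rfl]
      · intro b _ hb; rw [if_neg (fun h => hb (Fin.ext h))]
      · intro h; exact absurd (Finset.mem_univ _) h
    rw [hs2, hs3] at hmain
    simp only [hcast] at hmain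
    exact hmain
  refine ⟨?_, hkey, ?_, ?_, ?_⟩
  · exact pow_ne_zero _ two_ne_zero
  · intro x y y'
    show Sfun Φ j x (y + y') = _
    unfold Sfun
    rw [← Finset.sum_add_distrib]
    refine Finset.sum_congr rfl fun k _ => ?_
    by_cases hk : (k:ℕ) < j
    · rw [if_pos hk, if_pos hk, if_pos hk, sj_add_right]
    · rw [if_neg hk, if_neg hk, if_neg hk, add_zero]
  · intro x x' y
    unfold Sfun
    rw [← Finset.sum_add_distrib]
    refine Finset.sum_congr rfl fun k _ => ?_
    by_cases hk : (k:ℕ) < j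
    · rw [if_pos hk, if_pos hk, if_pos hk, sj_add_right, sj_add_left]
    · rw [if_neg hk, if_neg hk, if_neg hk, add_zero]
  · have h := hkey 0 0
    rw [sj_zero_left, smul_zero] at h
    have hS0 : Sfun Φ j 0 0 = 0 := by
      unfold Sfun
      refine Finset.sum_eq_zero fun k _ => ?_
      by_cases hk : (k:ℕ) < j
      · rw [if_pos hk, sj_zero_right]
      · rw [if_neg hk]
    rw [hS0, sj_zero_right, sj_zero_left] at h
    simpa using h

end S9

theorem stmt_9 {A : Type*} [NonAssocRing A] [Module ℂ A]
    [SMulCommClass ℂ A A] [IsScalarTower ℂ A A] [StarRing A]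
    (halt₁ : ∀ a b : A, a * a * b = a * (a * b))
    (halt₂ : ∀ a b : A, b * a * a = b * (a * a))
    (e : A) (heStar : star e = e) (heIdem : e * e = e) (he0 : e ≠ 0) (he1 : e ≠ 1)
    (hsp : ∀ x : A, (∀ r : A, x * r * e = 0) → x = 0)
    (hcl : ∀ x : A, (∀ r : A, x * r * (1 - e) = 0) → x = 0)
    (n : ℕ) (hn : 2 ≤ n) (Φ : A → A)
    (hΦ : ∀ x y : A,
      Φ (leftStarJordan (List.ofFn (lastTwoFamily n x y))) =
        ∑ k : Fin n, leftStarJordan (List.ofFn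
          (Function.update (lastTwoFamily n x y) k (Φ (lastTwoFamily n x y k))))) :
    ∀ a b : A, Φ (a + b) = Φ a + Φ b := by
  obtain ⟨j, rfl⟩ : ∃ j, n = j + 2 := ⟨n - 2, by omega⟩
  exact S9.absMain halt₁ halt₂ (S9.build_setup Φ j hΦ) heIdem heStar hsp hcl
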